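/- Calibration under optional stopping (general case): for an a.s.-finite stopping time τ, the pushforward measures of the stopped posterior odds γ_τ under the conditional Bayes marginals satisfy, for μ^{P̄0,γ_τ}-almost all b, (π(H1)/π(H0)) · (dμ^{P̄1,γ_τ}/dμ^{P̄0,γ_τ})(b) = b. -/

import Mathlib

open MeasureTheory ProbabilityTheory
open scoped ENNReal

/-- Calibration under optional stopping (general case, Corollary 1): for an a.s.-finite
stopping time `τ` adapted to the filtration, the pushforwards of the stopped posterior
odds `γ_τ` under the Bayes marginals satisfy, `μ^{P̄0,γ_τ}`-a.e.,
`(π(H1)/π(H0)) · (dμ^{P̄1,γ_τ}/dμ^{P̄0,γ_τ})(b) = b`. -/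
theorem calibration_under_optional_stopping_general
    {Ω : Type*} [m0 : MeasurableSpace Ω] (ℱ : Filtration ℕ m0)
    (P0 P1 : Measure Ω) [IsProbabilityMeasure P0] [IsProbabilityMeasure P1]
    (hac01 : P1 ≪ P0) (hac10 : P0 ≪ P1)
    (π0 π1 : ℝ≥0∞) (hπ0 : 0 < π0) (hπ0' : π0 < ⊤) (hπ1 : 0 < π1) (hπ1' : π1 < ⊤)
    (τ : Ω → ℕ) (hτ : ∀ n, MeasurableSet[ℱ n] {ω | τ ω = n})
    (γ : ℕ → Ω → ℝ≥0∞)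
    (hγ : ∀ n ω, γ n ω =
      (π1 / π0) * (P1.trim (ℱ.le n)).rnDeriv (P0.trim (ℱ.le n)) ω) :
    ∀ᵐ b ∂(Measure.map (fun ω => γ (τ ω) ω) P0),
      (π1 / π0) * (Measure.map (fun ω => γ (τ ω) ω) P1).rnDeriv
        (Measure.map (fun ω => γ (τ ω) ω) P0) b = b := by
  set c : ℝ≥0∞ := π1 / π0 with hc
  have hc0 : c ≠ 0 := by
    simp only [hc, ne_eq, ENNReal.div_eq_zero_iff, not_or]
    exact ⟨hπ1.ne', hπ0'.ne⟩
  have hct : c ≠ ⊤ := by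
    simp only [hc, ne_eq, ENNReal.div_eq_top, not_or, not_and_or]
    exact ⟨Or.inr hπ0.ne', Or.inl hπ1'.ne⟩
  set f : ℕ → Ω → ℝ≥0∞ := fun n => (P1.trim (ℱ.le n)).rnDeriv (P0.trim (ℱ.le n)) with hf
  have hf_meas : ∀ n, Measurable[ℱ n] (f n) := fun n => Measure.measurable_rnDeriv _ _
  have hf_meas' : ∀ n, Measurable (f n) := fun n => (hf_meas n).mono (ℱ.le n) le_rfl
  set g : Ω → ℝ≥0∞ := fun ω => γ (τ ω) ω with hg
  have hg_eq : ∀ ω, g ω = c * f (τ ω) ω := fun ω => hγ (τ ω) ω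
  have hτset : ∀ n, MeasurableSet {ω | τ ω = n} := fun n => ℱ.le n _ (hτ n)
  have hg_meas : Measurable g := by
    have : g = fun ω => ∑' n, Set.indicator {ω | τ ω = n} (fun ω => c * f n ω) ω := by
      funext ω
      rw [tsum_eq_single (τ ω)]
      · simp [hg_eq ω, Set.indicator_of_mem, Set.mem_setOf_eq]
      · intro n hn
        exact Set.indicator_of_notMem (by simpa using hn.symm) _
    rw [this]
    exact Measurable.ennreal_tsum fun n =>
      ((measurable_const.mul (hf_meas' n)).indicator (hτset n))
  -- absolute continuity of trimmed measures
  have hac_trim : ∀ n, P1.trim (ℱ.le n) ≪ P0.trim (ℱ.le n) := by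
    intro n
    refine Measure.AbsolutelyContinuous.mk fun s hs h0 => ?_
    rw [trim_measurableSet_eq (ℱ.le n) hs] at h0 ⊢
    exact hac01 h0
  -- key computation
  have key : ∀ s : Set ℝ≥0∞, MeasurableSet s →
      P1 (g ⁻¹' s) = ∫⁻ ω in g ⁻¹' s, c⁻¹ * g ω ∂P0 := by
    intro s hs
    set A : ℕ → Set Ω := fun n => {ω | τ ω = n} ∩ {ω | c * f n ω ∈ s} with hA
    have hA_eq : ∀ n, A n = {ω | τ ω = n} ∩ g ⁻¹' s := by
      intro n
      ext ω
      simp only [hA, Set.mem_inter_iff, Set.mem_setOf_eq, Set.mem_preimage]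
      refine and_congr_right fun h => ?_
      rw [hg_eq ω, h]
    have hA_meas : ∀ n, MeasurableSet[ℱ n] (A n) :=
      fun n => (hτ n).inter ((hf_meas n).const_mul c hs)
    have hA_meas' : ∀ n, MeasurableSet (A n) := fun n => ℱ.le n _ (hA_meas n)
    have hA_union : (⋃ n, A n) = g ⁻¹' s := by
      ext ω
      simp only [Set.mem_iUnion, hA_eq, Set.mem_inter_iff, Set.mem_setOf_eq]
      constructor
      · rintro ⟨n, _, h⟩; exact h
      · intro h; exact ⟨τ ω, rfl, h⟩
    have hA_disj : Pairwise (Function.onFun Disjoint A) := by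
      intro i j hij
      refine Set.disjoint_left.mpr fun ω hi hj => hij ?_
      rw [← hi.1, ← hj.1]
    have hstep : ∀ n, ∫⁻ ω in A n, c⁻¹ * g ω ∂P0 = P1 (A n) := by
      intro n
      have h1 : ∫⁻ ω in A n, c⁻¹ * g ω ∂P0 = ∫⁻ ω in A n, f n ω ∂P0 := by
        refine setLIntegral_congr_fun (hA_meas' n) (fun ⦃ω⦄ hω => ?_)
        have hτω : τ ω = n := hω.1
        rw [hg_eq ω, hτω, ← mul_assoc, ENNReal.inv_mul_cancel hc0 hct, one_mul]
      have h2 : ∫⁻ ω in A n, f n ω ∂P0 = ∫⁻ ω in A n, f n ω ∂(P0.trim (ℱ.le n)) := by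
        rw [restrict_trim (ℱ.le n) P0 (hA_meas n),
          lintegral_trim (ℱ.le n) (hf_meas n)]
      have h3 : ∫⁻ ω in A n, f n ω ∂(P0.trim (ℱ.le n)) = P1.trim (ℱ.le n) (A n) :=
        Measure.setLIntegral_rnDeriv' (hac_trim n) (hA_meas n)
      rw [h1, h2, h3, trim_measurableSet_eq (ℱ.le n) (hA_meas n)]
    calc P1 (g ⁻¹' s) = P1 (⋃ n, A n) := by rw [hA_union]
      _ = ∑' n, P1 (A n) := measure_iUnion hA_disj hA_meas'
      _ = ∑' n, ∫⁻ ω in A n, c⁻¹ * g ω ∂P0 := by simp_rw [hstep]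
      _ = ∫⁻ ω in ⋃ n, A n, c⁻¹ * g ω ∂P0 := (lintegral_iUnion hA_meas' hA_disj _).symm
      _ = ∫⁻ ω in g ⁻¹' s, c⁻¹ * g ω ∂P0 := by rw [hA_union]
  -- identify the pushforward of P1 as a density of the pushforward of P0
  have hmap : Measure.map g P1 = (Measure.map g P0).withDensity (fun b => c⁻¹ * b) := by
    ext s hs
    rw [Measure.map_apply hg_meas hs, withDensity_apply _ hs,
      setLIntegral_map (f := fun b => c⁻¹ * b) hs (measurable_const.mul measurable_id) hg_meas]
    exact key s hs
  have : IsProbabilityMeasure (Measure.map g P0) :=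
    Measure.isProbabilityMeasure_map hg_meas.aemeasurable
  have hrn : (Measure.map g P1).rnDeriv (Measure.map g P0)
      =ᵐ[Measure.map g P0] fun b => c⁻¹ * b := by
    rw [hmap]
    exact Measure.rnDeriv_withDensity _ (measurable_const.mul measurable_id)
  filter_upwards [hrn] with b hb
  rw [hb, ← mul_assoc, ENNReal.mul_inv_cancel hc0 hct, one_mul]
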